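/- Let X be a locally compact Hausdorff space and σ_1, …, σ_n : X → X (n ≥ 1) continuous proper maps. Let U = X \ (σ_1(X) ∪ ⋯ ∪ σ_n(X)), and form the space X^T = X ⊔ (cl(U) × ℤ_{<0}) (topological disjoint union, where cl(U) carries the subspace topology and ℤ_{<0} = {k ∈ ℤ : k < 0} is discrete). Define σ_i^T : X^T → X^T by σ_i^T(x) = σ_i(x) for x ∈ X, σ_i^T(u, k) = (u, k+1) for k < -1, and σ_i^T(u, -1) = u ∈ X. Then each σ_i^T is continuous and proper, σ_i^T restricted to X equals σ_i, and the extended system is surjective: X^T = σ_1^T(X^T) ∪ ⋯ ∪ σ_n^T(X^T). -/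

import Mathlib

open Topology

instance adding_a_tail_aux_wlc {A B : Type*} [TopologicalSpace A] [TopologicalSpace B]
    [WeaklyLocallyCompactSpace A] [WeaklyLocallyCompactSpace B] :
    WeaklyLocallyCompactSpace (A ⊕ B) where
  exists_compact_mem_nhds x := by
    cases x with
    | inl a =>
      obtain ⟨s, hsc, hs⟩ := exists_compact_mem_nhds a
      exact ⟨Sum.inl '' s, hsc.image continuous_inl, isOpenMap_inl.image_mem_nhds hs⟩
    | inr b =>
      obtain ⟨s, hsc, hs⟩ := exists_compact_mem_nhds b
      exact ⟨Sum.inr '' s, hsc.image continuous_inr, isOpenMap_inr.image_mem_nhds hs⟩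

/-- The successor on negative integers, clamped at `-1`. -/
def tailSucc (k : {k : ℤ // k < 0}) : {k : ℤ // k < 0} :=
  ⟨min (k.1 + 1) (-1), by have := k.2; omega⟩

/-- The model extended map on `X ⊕ (C × ℤ₋)`. -/
noncomputable def tailMap {X : Type*} (C : Set X) (f : X → X) :
    (X ⊕ (C × {k : ℤ // k < 0})) → (X ⊕ (C × {k : ℤ // k < 0})) :=
  Sum.elim (fun x => Sum.inl (f x))
    (fun p => if p.2.1 = -1 then Sum.inl p.1.1 else Sum.inr (p.1, tailSucc p.2))

lemma tailMap_continuous {X : Type*} [TopologicalSpace X] (C : Set X) (f : X → X)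
    (hf : Continuous f) : Continuous (tailMap C f) := by
  refine Continuous.sumElim (continuous_inl.comp hf) ?_
  have hclopen : IsClopen {p : C × {k : ℤ // k < 0} | p.2.1 = -1} := by
    have : {p : C × {k : ℤ // k < 0} | p.2.1 = -1} =
        Prod.snd ⁻¹' {k : {k : ℤ // k < 0} | k.1 = -1} := rfl
    rw [this]
    exact (isClopen_discrete _).preimage continuous_snd
  refine Continuous.if ?_ ?_ ?_
  · intro a ha
    rw [hclopen.frontier_eq] at ha
    exact ha.elim
  · exact continuous_inl.comp (continuous_subtype_val.comp continuous_fst)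
  · exact continuous_inr.comp (continuous_fst.prodMk
      ((continuous_of_discreteTopology (f := tailSucc)).comp continuous_snd))

lemma tailMap_proper {X : Type*} [TopologicalSpace X] [LocallyCompactSpace X] [T2Space X]
    {C : Set X} (hC : IsClosed C) (f : X → X) (hf : Continuous f) (hfp : IsProperMap f) :
    IsProperMap (tailMap C f) := by
  classical
  haveI : LocallyCompactSpace C := hC.locallyCompactSpace
  rw [isProperMap_iff_isCompact_preimage]
  refine ⟨tailMap_continuous C f hf, fun L hL => ?_⟩
  have hK1 : IsCompact (Sum.inl ⁻¹' L : Set X) := by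
    have h1 : IsCompact (L ∩ Set.range (Sum.inl : X → X ⊕ (C × ({k : ℤ // k < 0})))) :=
      hL.inter_right isClosed_range_inl
    have h2 : Sum.inl '' (Sum.inl ⁻¹' L : Set X) =
        L ∩ Set.range (Sum.inl : X → X ⊕ (C × ({k : ℤ // k < 0}))) := by
      ext y; cases y <;> simp
    rw [(Topology.IsEmbedding.inl (X := X) (Y := C × ({k : ℤ // k < 0}))).isCompact_iff, h2]
    exact h1
  have hK2 : IsCompact (Sum.inr ⁻¹' L : Set (C × ({k : ℤ // k < 0}))) := by
    have h1 : IsCompact (L ∩ Set.range (Sum.inr : C × ({k : ℤ // k < 0}) → X ⊕ (C × ({k : ℤ // k < 0})))) :=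
      hL.inter_right isClosed_range_inr
    have h2 : Sum.inr '' (Sum.inr ⁻¹' L : Set (C × ({k : ℤ // k < 0}))) =
        L ∩ Set.range (Sum.inr : C × ({k : ℤ // k < 0}) → X ⊕ (C × ({k : ℤ // k < 0}))) := by
      ext y; cases y <;> simp
    rw [(Topology.IsEmbedding.inr (X := X) (Y := C × ({k : ℤ // k < 0}))).isCompact_iff, h2]
    exact h1
  have hP1 : IsCompact (Sum.inl '' (f ⁻¹' (Sum.inl ⁻¹' L)) : Set (X ⊕ (C × ({k : ℤ // k < 0})))) :=
    (hfp.isCompact_preimage hK1).image continuous_inl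
  have hCK1 : IsCompact ((Subtype.val : C → X) ⁻¹' (Sum.inl ⁻¹' L)) := by
    rw [Topology.IsEmbedding.subtypeVal.isCompact_iff, Subtype.image_preimage_coe]
    exact hK1.inter_left hC
  have hP2 : IsCompact (Sum.inr '' ((fun u : C => (u, (⟨-1, by norm_num⟩ : ({k : ℤ // k < 0})))) ''
      ((Subtype.val : C → X) ⁻¹' (Sum.inl ⁻¹' L))) : Set (X ⊕ (C × ({k : ℤ // k < 0})))) :=
    (hCK1.image (continuous_id.prodMk continuous_const)).image continuous_inr
  have hP3 : IsCompact (Sum.inr ''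
      ((fun p : C × ({k : ℤ // k < 0}) => (p.1, (⟨p.2.1 - 1, by have := p.2.2; omega⟩ : ({k : ℤ // k < 0})))) ''
      (Sum.inr ⁻¹' L)) : Set (X ⊕ (C × ({k : ℤ // k < 0})))) := by
    refine (hK2.image ?_).image continuous_inr
    exact continuous_fst.prodMk
      ((continuous_of_discreteTopology
        (f := fun k : ({k : ℤ // k < 0}) => (⟨k.1 - 1, by have := k.2; omega⟩ : ({k : ℤ // k < 0})))).comp continuous_snd)
  have hclosed : IsClosed (tailMap C f ⁻¹' L) := hL.isClosed.preimage (tailMap_continuous C f hf)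
  refine IsCompact.of_isClosed_subset ((hP1.union hP2).union hP3) hclosed ?_
  rintro p hp
  cases p with
  | inl x =>
    have : f x ∈ Sum.inl ⁻¹' L := by simpa [tailMap] using hp
    exact Or.inl (Or.inl ⟨x, this, rfl⟩)
  | inr p =>
    obtain ⟨u, k⟩ := p
    by_cases hk : k.1 = -1
    · have hku : u.1 ∈ Sum.inl ⁻¹' L := by simpa [tailMap, hk] using hp
      refine Or.inl (Or.inr ⟨(u, k), ⟨u, hku, ?_⟩, rfl⟩)
      exact congrArg (Prod.mk u) (Subtype.ext hk.symm)
    · have hmem : (u, tailSucc k) ∈ Sum.inr ⁻¹' L := by simpa [tailMap, hk] using hp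
      refine Or.inr ⟨(u, k), ⟨(u, tailSucc k), hmem, ?_⟩, rfl⟩
      refine congrArg (Prod.mk u) (Subtype.ext ?_)
      have := k.2
      simp only [tailSucc]
      omega

/-- "Adding a tail" to a non-surjective multivariable dynamical system: the extended maps
`σᵢᵀ` on `Xᵀ = X ⊔ (cl(U) × ℤ₋)` are continuous and proper, extend the `σᵢ`, and make the
system surjective. -/
theorem adding_a_tail {X : Type*} [TopologicalSpace X] [LocallyCompactSpace X] [T2Space X]
    (n : ℕ) (hn : 1 ≤ n) (σ : Fin n → X → X)
    (hσ : ∀ i, Continuous (σ i)) (hproper : ∀ i, IsProperMap (σ i))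
    (σT : Fin n → (X ⊕ ((closure (Set.univ \ ⋃ i, Set.range (σ i)) : Set X) × {k : ℤ // k < 0}))
      → (X ⊕ ((closure (Set.univ \ ⋃ i, Set.range (σ i)) : Set X) × {k : ℤ // k < 0})))
    (hT1 : ∀ i x, σT i (Sum.inl x) = Sum.inl (σ i x))
    (hT2 : ∀ (i : Fin n) (u : (closure (Set.univ \ ⋃ i, Set.range (σ i)) : Set X))
      (k : {k : ℤ // k < 0}) (hk : k.1 < -1),
      σT i (Sum.inr (u, k)) = Sum.inr (u, ⟨k.1 + 1, by omega⟩))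
    (hT3 : ∀ (i : Fin n) (u : (closure (Set.univ \ ⋃ i, Set.range (σ i)) : Set X)),
      σT i (Sum.inr (u, ⟨-1, by norm_num⟩)) = Sum.inl u.1) :
    (∀ i, Continuous (σT i) ∧ IsProperMap (σT i)) ∧
    (∀ i x, σT i (Sum.inl x) = Sum.inl (σ i x)) ∧
    (⋃ i, Set.range (σT i)) = Set.univ := by
  classical
  have hEq : ∀ i, σT i = tailMap (closure (Set.univ \ ⋃ i, Set.range (σ i))) (σ i) := by
    intro i
    funext p
    cases p with
    | inl x => simpa [tailMap] using hT1 i x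
    | inr p =>
      obtain ⟨u, k⟩ := p
      by_cases hk : k.1 = -1
      · have hkk : k = (⟨-1, by norm_num⟩ : {k : ℤ // k < 0}) := Subtype.ext hk
        subst hkk
        simpa [tailMap] using hT3 i u
      · have hk' : k.1 < -1 := by have := k.2; omega
        rw [hT2 i u k hk']
        have hmin : tailSucc k = ⟨k.1 + 1, by omega⟩ :=
          Subtype.ext (by simp [tailSucc]; omega)
        simp [tailMap, hk, hmin]
  refine ⟨fun i => ?_, hT1, ?_⟩
  · rw [hEq i]
    exact ⟨tailMap_continuous _ _ (hσ i),
      tailMap_proper isClosed_closure _ (hσ i) (hproper i)⟩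
  -- surjectivity
  rw [Set.eq_univ_iff_forall]
  intro p
  rw [Set.mem_iUnion]
  cases p with
  | inl x =>
    by_cases hx : x ∈ ⋃ j, Set.range (σ j)
    · obtain ⟨j, y, hy⟩ := by simpa [Set.mem_iUnion] using hx
      exact ⟨j, Sum.inl y, by rw [hT1, hy]⟩
    · have hxC : x ∈ closure (Set.univ \ ⋃ i, Set.range (σ i)) :=
        subset_closure ⟨trivial, hx⟩
      exact ⟨⟨0, hn⟩, Sum.inr (⟨x, hxC⟩, ⟨-1, by norm_num⟩), hT3 _ _⟩
  | inr p =>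
    obtain ⟨u, k⟩ := p
    have hk2 := k.2
    refine ⟨⟨0, hn⟩, Sum.inr (u, ⟨k.1 - 1, by omega⟩), ?_⟩
    rw [hT2 _ _ _ (show k.1 - 1 < -1 by omega)]
    exact congrArg (fun q => Sum.inr (u, q)) (Subtype.ext (by simp))
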